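/- For the Jiang–Shu smoothness indicator defined by β_m = Σ_{q=1}^{2} Δx^{2q−1} ∫_{x_{i−1/2}}^{x_{i+1/2}} (d^q p/dx^q)² dx, where p is the quadratic interpolating f_{i−1}, f_i, f_{i+1} at x_{i−1}, x_i, x_{i+1}, one has the closed form β_1 = (13/12)(f_{i−1} − 2f_i + f_{i+1})² + (1/4)(f_{i+1} − f_{i−1})². -/

import Mathlib

theorem beta1_closed_form (p : Polynomial ℝ) (hp : p.degree ≤ 2)
    (x Δx : ℝ) (hΔx : 0 < Δx) (fm1 f0 f1 : ℝ)
    (h0 : p.eval (x - Δx) = fm1) (h1 : p.eval x = f0) (h2 : p.eval (x + Δx) = f1) :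
    Δx * (∫ t in (x - Δx / 2)..(x + Δx / 2), (p.derivative.eval t) ^ 2) +
      Δx ^ 3 * (∫ t in (x - Δx / 2)..(x + Δx / 2), (p.derivative.derivative.eval t) ^ 2) =
    (13 / 12) * (fm1 - 2 * f0 + f1) ^ 2 + (1 / 4) * (f1 - fm1) ^ 2 := by
  set a := p.coeff 0 with ha
  set b := p.coeff 1 with hb
  set c := p.coeff 2 with hc
  have hnat : p.natDegree < 3 :=
    lt_of_le_of_lt (Polynomial.natDegree_le_of_degree_le hp) (by norm_num)
  have heval : ∀ t : ℝ, p.eval t = a + b * t + c * t ^ 2 := by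
    intro t
    rw [Polynomial.eval_eq_sum_range' hnat]
    simp [Finset.sum_range_succ]
    rw [ha, hb, hc]
  have hdnat : p.derivative.natDegree < 2 := by
    have := Polynomial.natDegree_derivative_le p
    omega
  have hd : ∀ t : ℝ, p.derivative.eval t = b + 2 * c * t := by
    intro t
    rw [Polynomial.eval_eq_sum_range' hdnat]
    simp [Finset.sum_range_succ, Polynomial.coeff_derivative]
    rw [hb, hc]; ring
  have hddnat : p.derivative.derivative.natDegree < 1 := by
    have h1 := Polynomial.natDegree_derivative_le p.derivative
    have h2 := Polynomial.natDegree_derivative_le p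
    omega
  have hdd : ∀ t : ℝ, p.derivative.derivative.eval t = 2 * c := by
    intro t
    rw [Polynomial.eval_eq_sum_range' hddnat]
    simp [Finset.sum_range_succ, Polynomial.coeff_derivative]
    try tauto
    try ring
  simp only [hd, hdd]
  have hint1 : (∫ t in (x - Δx / 2)..(x + Δx / 2), (b + 2 * c * t) ^ 2) =
      (b ^ 2 * (x + Δx / 2) + 2 * b * c * (x + Δx / 2) ^ 2 + (4 / 3) * c ^ 2 * (x + Δx / 2) ^ 3)
      - (b ^ 2 * (x - Δx / 2) + 2 * b * c * (x - Δx / 2) ^ 2 + (4 / 3) * c ^ 2 * (x - Δx / 2) ^ 3) := by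
    apply intervalIntegral.integral_eq_sub_of_hasDerivAt
      (f := fun t => b ^ 2 * t + 2 * b * c * t ^ 2 + (4 / 3) * c ^ 2 * t ^ 3)
    · intro t _
      have h := (((hasDerivAt_id t).const_mul (b ^ 2)).add
          (((hasDerivAt_pow 2 t).const_mul (2 * b * c)).add
            ((hasDerivAt_pow 3 t).const_mul ((4 : ℝ) / 3 * c ^ 2))))
      convert h using 1
      · ext s; simp only [id, Pi.add_apply]; ring
      · push_cast; ring
    · exact (Continuous.intervalIntegrable (by fun_prop) _ _)
  rw [hint1, intervalIntegral.integral_const]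
  subst h0 h1 h2
  rw [heval (x - Δx), heval x, heval (x + Δx)]
  simp only [smul_eq_mul]
  ring
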